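/- Let S_1, …, S_{k₀} and Ŝ_1, …, Ŝ_{k₀} be real p×p matrices with M = Σ_{k=1}^{k₀} S_k S_kᵀ and M̂ = Σ_{k=1}^{k₀} Ŝ_k Ŝ_kᵀ. Let a, v ∈ ℝ^p be unit vectors such that S_kᵀ a = 0 for all 1 ≤ k ≤ k₀ (i.e., a is an eigenvector of M with eigenvalue 0). Then vᵀ M̂ v ≤ Σ_{k=1}^{k₀} ‖Ŝ_k − S_k‖² + 2‖v − a‖ · Σ_{k=1}^{k₀} ‖Ŝ_k − S_k‖·‖S_k‖ + ‖v − a‖² · ‖M‖. (This is the deterministic core of the decomposition λ̂_j = K₁ + K₂ + K₃ used to prove the faster rates for estimated zero-eigenvalues in Proposition 1(ii) and Theorem 1(ii).) -/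

import Mathlib

open Matrix Finset

/-- Spectral norm of a real matrix: the operator norm of the induced linear map
between Euclidean spaces (the largest singular value). -/
noncomputable def specNorm {m n : ℕ} (G : Matrix (Fin m) (Fin n) ℝ) : ℝ :=
  ‖LinearMap.toContinuousLinearMap (Matrix.toEuclideanLin G)‖

/-- Euclidean norm of a vector in `ℝ^p`. -/
noncomputable def euclNorm {p : ℕ} (v : Fin p → ℝ) : ℝ :=
  ‖(EuclideanSpace.equiv (Fin p) ℝ).symm v‖

namespace ZeroEigAux

lemma euclNorm_eq {p : ℕ} (x : Fin p → ℝ) :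
    euclNorm x = ‖(WithLp.equiv 2 (Fin p → ℝ)).symm x‖ := rfl

lemma euclNorm_nonneg {p : ℕ} (x : Fin p → ℝ) : 0 ≤ euclNorm x := norm_nonneg _

lemma dot_eq_inner {p : ℕ} (x y : Fin p → ℝ) :
    x ⬝ᵥ y = inner (𝕜 := ℝ) ((WithLp.equiv 2 (Fin p → ℝ)).symm x)
      ((WithLp.equiv 2 (Fin p → ℝ)).symm y) := by
  simp [dotProduct, PiLp.inner_apply, mul_comm]

lemma dot_self_eq_sq {p : ℕ} (x : Fin p → ℝ) : x ⬝ᵥ x = euclNorm x ^ 2 := by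
  rw [dot_eq_inner, euclNorm_eq, real_inner_self_eq_norm_sq]

lemma dot_le {p : ℕ} (x y : Fin p → ℝ) : x ⬝ᵥ y ≤ euclNorm x * euclNorm y := by
  rw [dot_eq_inner, euclNorm_eq, euclNorm_eq]; exact real_inner_le_norm _ _

lemma mulVec_norm_le {m n : ℕ} (G : Matrix (Fin m) (Fin n) ℝ) (x : Fin n → ℝ) :
    euclNorm (G *ᵥ x) ≤ specNorm G * euclNorm x := by
  have h := (LinearMap.toContinuousLinearMap (Matrix.toEuclideanLin G)).le_opNorm
    ((WithLp.equiv 2 (Fin n → ℝ)).symm x)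
  simpa [euclNorm_eq, specNorm, Matrix.toEuclideanLin_apply_piLp_toLp] using h

lemma specNorm_transpose {m n : ℕ} (G : Matrix (Fin m) (Fin n) ℝ) :
    specNorm Gᵀ = specNorm G := by
  have h : Gᵀ = Gᴴ := by ext i j; simp [Matrix.conjTranspose_apply]
  rw [specNorm, specNorm, h, Matrix.toEuclideanLin_conjTranspose_eq_adjoint,
    LinearMap.adjoint_toContinuousLinearMap]
  exact ContinuousLinearMap.adjoint.norm_map _

lemma euclNorm_add_le {p : ℕ} (x y : Fin p → ℝ) :
    euclNorm (x + y) ≤ euclNorm x + euclNorm y := by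
  rw [euclNorm_eq, euclNorm_eq, euclNorm_eq,
    show (WithLp.equiv 2 (Fin p → ℝ)).symm (x + y)
      = (WithLp.equiv 2 (Fin p → ℝ)).symm x + (WithLp.equiv 2 (Fin p → ℝ)).symm y from rfl]
  exact norm_add_le _ _

lemma sum_mulVec' {p k₀ : ℕ} (A : Fin k₀ → Matrix (Fin p) (Fin p) ℝ) (x : Fin p → ℝ) :
    (∑ k, A k) *ᵥ x = ∑ k, A k *ᵥ x := by
  ext i
  simp [Matrix.mulVec, dotProduct, Matrix.sum_apply, Finset.sum_mul]
  rw [Finset.sum_comm]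

lemma dot_sum {p k₀ : ℕ} (x : Fin p → ℝ) (y : Fin k₀ → Fin p → ℝ) :
    x ⬝ᵥ (∑ k, y k) = ∑ k, x ⬝ᵥ y k := by
  simp [dotProduct, Finset.mul_sum, Finset.sum_apply]
  rw [Finset.sum_comm]

lemma quad_eq {p k₀ : ℕ} (T : Fin k₀ → Matrix (Fin p) (Fin p) ℝ) (x : Fin p → ℝ) :
    x ⬝ᵥ (∑ k, T k * (T k)ᵀ) *ᵥ x = ∑ k, euclNorm ((T k)ᵀ *ᵥ x) ^ 2 := by
  rw [sum_mulVec', dot_sum]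
  refine Finset.sum_congr rfl fun k _ => ?_
  rw [← Matrix.mulVec_mulVec, Matrix.dotProduct_mulVec, ← Matrix.mulVec_transpose,
    dot_self_eq_sq]

end ZeroEigAux

open ZeroEigAux in
/-- deterministic core of the `K₁ + K₂ + K₃` decomposition:
if `a, v` are unit vectors with `S_kᵀ a = 0` for all `k` (so `a` is a null
eigenvector of `M = ∑ S_k S_kᵀ`), then
`vᵀ M̂ v ≤ ∑ ‖Ŝ_k − S_k‖² + 2‖v−a‖ ∑ ‖Ŝ_k − S_k‖‖S_k‖ + ‖v−a‖²‖M‖`. -/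
theorem zero_eigenvalue_estimate_bound
    {p k₀ : ℕ} (S Shat : Fin k₀ → Matrix (Fin p) (Fin p) ℝ)
    (M Mhat : Matrix (Fin p) (Fin p) ℝ)
    (hM : M = ∑ k, S k * (S k)ᵀ)
    (hMhat : Mhat = ∑ k, Shat k * (Shat k)ᵀ)
    (a v : Fin p → ℝ) (ha : euclNorm a = 1) (hv : euclNorm v = 1)
    (haS : ∀ k, (S k)ᵀ.mulVec a = 0) :
    v ⬝ᵥ Mhat.mulVec v
      ≤ ∑ k, specNorm (Shat k - S k) ^ 2
        + 2 * euclNorm (v - a) * ∑ k, specNorm (Shat k - S k) * specNorm (S k)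
        + euclNorm (v - a) ^ 2 * specNorm M := by
  subst hM hMhat
  set w := v - a with hw
  have key : ∀ k : Fin k₀, ((Shat k)ᵀ) *ᵥ v = ((Shat k - S k)ᵀ) *ᵥ v + ((S k)ᵀ) *ᵥ w := by
    intro k
    rw [Matrix.transpose_sub, Matrix.sub_mulVec, Matrix.mulVec_sub, haS k]
    abel
  have term_bound : ∀ k : Fin k₀, euclNorm ((Shat k)ᵀ *ᵥ v) ^ 2
      ≤ specNorm (Shat k - S k) ^ 2
        + 2 * euclNorm w * (specNorm (Shat k - S k) * specNorm (S k))
        + euclNorm ((S k)ᵀ *ᵥ w) ^ 2 := by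
    intro k
    have h1 : euclNorm ((Shat k - S k)ᵀ *ᵥ v) ≤ specNorm (Shat k - S k) := by
      have h := mulVec_norm_le ((Shat k - S k)ᵀ) v
      rwa [specNorm_transpose, hv, mul_one] at h
    have h2 : euclNorm ((S k)ᵀ *ᵥ w) ≤ specNorm (S k) * euclNorm w := by
      have h := mulVec_norm_le ((S k)ᵀ) w
      rwa [specNorm_transpose] at h
    have htri : euclNorm ((Shat k)ᵀ *ᵥ v) ≤
        euclNorm ((Shat k - S k)ᵀ *ᵥ v) + euclNorm ((S k)ᵀ *ᵥ w) := by
      rw [key k]; exact euclNorm_add_le _ _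
    have hX := euclNorm_nonneg ((Shat k - S k)ᵀ *ᵥ v)
    have hY := euclNorm_nonneg ((S k)ᵀ *ᵥ w)
    have hE := euclNorm_nonneg ((Shat k)ᵀ *ᵥ v)
    have hw0 := euclNorm_nonneg w
    nlinarith [mul_le_mul htri htri hE (by linarith : (0:ℝ) ≤ euclNorm ((Shat k - S k)ᵀ *ᵥ v) + euclNorm ((S k)ᵀ *ᵥ w)),
      mul_le_mul h1 h2 hY (le_trans hX h1),
      mul_le_mul h1 h1 hX (le_trans hX h1)]
  have hMw : w ⬝ᵥ (∑ k, S k * (S k)ᵀ) *ᵥ w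
      ≤ euclNorm w ^ 2 * specNorm (∑ k, S k * (S k)ᵀ) := by
    have h1 := dot_le w ((∑ k, S k * (S k)ᵀ) *ᵥ w)
    have h2 := mulVec_norm_le (∑ k, S k * (S k)ᵀ) w
    have hw0 := euclNorm_nonneg w
    nlinarith
  calc v ⬝ᵥ (∑ k, Shat k * (Shat k)ᵀ) *ᵥ v
      = ∑ k, euclNorm ((Shat k)ᵀ *ᵥ v) ^ 2 := quad_eq Shat v
    _ ≤ ∑ k, (specNorm (Shat k - S k) ^ 2
        + 2 * euclNorm w * (specNorm (Shat k - S k) * specNorm (S k))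
        + euclNorm ((S k)ᵀ *ᵥ w) ^ 2) := Finset.sum_le_sum fun k _ => term_bound k
    _ = ∑ k, specNorm (Shat k - S k) ^ 2
        + 2 * euclNorm w * ∑ k, specNorm (Shat k - S k) * specNorm (S k)
        + ∑ k, euclNorm ((S k)ᵀ *ᵥ w) ^ 2 := by
        rw [Finset.sum_add_distrib, Finset.sum_add_distrib, Finset.mul_sum]
    _ ≤ ∑ k, specNorm (Shat k - S k) ^ 2
        + 2 * euclNorm w * ∑ k, specNorm (Shat k - S k) * specNorm (S k)
        + euclNorm w ^ 2 * specNorm (∑ k, S k * (S k)ᵀ) := by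
        have := (quad_eq S w).symm.trans_le hMw
        linarith
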